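/- In LFI3 the relation α ≡ β := (α↔β) ∧ (¬α↔¬β) ∧ (¬∘α↔¬∘β) is a congruence. Concretely: (i) for every valuation h over the LFI3 matrix and all formulas α, β, h(α≡β) is designated if and only if h(α)=h(β); consequently (ii) the relation α ≈ β, defined by ⊨_LFI3 α≡β, is an equivalence relation on formulas that is compatible with all connectives ¬, ∘, ∧, ∨, →. -/
import Mathlib


/-- Formulas of the language with ¬, ∘, ∧, ∨, →. -/
inductive Fm : Type
  | atom : Nat → Fm
  | neg : Fm → Fm
  | circ : Fm → Fm
  | conj : Fm → Fm → Fm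
  | disj : Fm → Fm → Fm
  | impl : Fm → Fm → Fm

/-- The five truth values of LFI3: T=(1,0,0), t=(1,0,1), b=(1,1,1), f=(0,1,1), F=(0,1,0). -/
inductive V5 : Type
  | T | t | b | f | F
deriving DecidableEq

open V5

/-- Rank in the linear order F < f < b < t < T. -/
def rk : V5 → Nat
  | F => 0 | f => 1 | b => 2 | t => 3 | T => 4

/-- Infimum in the linear order F < f < b < t < T. -/
def min5 (x y : V5) : V5 := if rk x ≤ rk y then x else y

/-- Supremum in the linear order F < f < b < t < T. -/
def max5 (x y : V5) : V5 := if rk x ≤ rk y then y else x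

/-- Negation: ¬(a₁,a₂,a₃) = (a₂,a₁,a₃). -/
def neg5 : V5 → V5
  | T => F | t => f | b => b | f => t | F => T

/-- Consistency: ∘(a₁,a₂,a₃) = (~(a₁∧a₂), a₃, a₃∧~(a₁∧a₂)). -/
def circ5 : V5 → V5
  | T => T | t => b | b => F | f => b | F => T

/-- Strong negation ~a := ¬a ∧ ∘a. -/
def snd5 (x : V5) : V5 := min5 (neg5 x) (circ5 x)

/-- Implication a→b := ~a ∨ b. -/
def imp5 (x y : V5) : V5 := max5 (snd5 x) y

/-- Designated values: D = {T, t, b}. -/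
def des (x : V5) : Prop := 2 ≤ rk x

/-- The valuation (homomorphism into the LFI3 algebra) extending an atom assignment. -/
def ev (v : Nat → V5) : Fm → V5
  | Fm.atom n => v n
  | Fm.neg a => neg5 (ev v a)
  | Fm.circ a => circ5 (ev v a)
  | Fm.conj a c => min5 (ev v a) (ev v c)
  | Fm.disj a c => max5 (ev v a) (ev v c)
  | Fm.impl a c => imp5 (ev v a) (ev v c)

/-- Semantical consequence of LFI3. -/
def L3Cons (Γ : Set Fm) (ψ : Fm) : Prop :=
  ∀ v : Nat → V5, (∀ γ ∈ Γ, des (ev v γ)) → des (ev v ψ)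

/-- Biimplication α↔β := (α→β)∧(β→α). -/
def Fm.biim (a c : Fm) : Fm := (a.impl c).conj (c.impl a)

/-- The congruence formula α ≡ β := (α↔β) ∧ (¬α↔¬β) ∧ (¬∘α↔¬∘β). -/
def eqF (a c : Fm) : Fm :=
  (Fm.biim a c).conj ((Fm.biim a.neg c.neg).conj (Fm.biim a.circ.neg c.circ.neg))

/-- The relation α ≈ β defined by ⊨_LFI3 α ≡ β. -/
def congRel (a c : Fm) : Prop := ∀ v : Nat → V5, des (ev v (eqF a c))


def eqV (x y : V5) : V5 :=
  min5 (min5 (imp5 x y) (imp5 y x))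
    (min5 (min5 (imp5 (neg5 x) (neg5 y)) (imp5 (neg5 y) (neg5 x)))
          (min5 (imp5 (neg5 (circ5 x)) (neg5 (circ5 y))) (imp5 (neg5 (circ5 y)) (neg5 (circ5 x)))))

lemma ev_eqF (v : Nat → V5) (α β : Fm) : ev v (eqF α β) = eqV (ev v α) (ev v β) := rfl

lemma key (x y : V5) : des (eqV x y) ↔ x = y := by
  cases x <;> cases y <;> simp only [des] <;> decide

lemma congRel_iff (α β : Fm) : congRel α β ↔ ∀ v, ev v α = ev v β := by
  unfold congRel
  constructor <;> intro h v <;> have := h v <;>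
    simpa [ev_eqF, key] using this

/-- The relation ≡ is a congruence in LFI3: (i) h(α≡β) is designated iff h(α)=h(β);
(ii) the induced relation is an equivalence compatible with all connectives. -/
theorem stmt12 :
    (∀ (v : Nat → V5) (α β : Fm), des (ev v (eqF α β)) ↔ ev v α = ev v β) ∧
    Equivalence congRel ∧
    (∀ α β : Fm, congRel α β → congRel α.neg β.neg) ∧
    (∀ α β : Fm, congRel α β → congRel α.circ β.circ) ∧
    (∀ α α' β β' : Fm, congRel α α' → congRel β β' → congRel (α.conj β) (α'.conj β')) ∧
    (∀ α α' β β' : Fm, congRel α α' → congRel β β' → congRel (α.disj β) (α'.disj β')) ∧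
    (∀ α α' β β' : Fm, congRel α α' → congRel β β' → congRel (α.impl β) (α'.impl β')) := by
  have key' : ∀ (v : Nat → V5) (α β : Fm), des (ev v (eqF α β)) ↔ ev v α = ev v β := by
    intro v α β; rw [ev_eqF]; exact key _ _
  refine ⟨key', ⟨?_, ?_, ?_⟩, ?_, ?_, ?_, ?_, ?_⟩
  · intro α; rw [congRel_iff]; intro v; rfl
  · intro α β h; rw [congRel_iff] at *; intro v; exact (h v).symm
  · intro α β γ h1 h2; rw [congRel_iff] at *; intro v; exact (h1 v).trans (h2 v)
  · intro α β h; rw [congRel_iff] at *; intro v; simp [ev, h v]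
  · intro α β h; rw [congRel_iff] at *; intro v; simp [ev, h v]
  all_goals intro α α' β β' h1 h2; rw [congRel_iff] at *; intro v; simp [ev, h1 v, h2 v]
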